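/- Let Γ, Δ be ILX-MCSs with A ▷ B ∈ Γ, Γ ≺_S Δ, and A ∈ Δ. Then there exists an ILX-MCS Δ' with Γ ≺_S Δ' and B, □¬B ∈ Δ'. -/

import Mathlib

inductive ILForm : Type
  | bot : ILForm
  | var : ℕ → ILForm
  | imp : ILForm → ILForm → ILForm
  | box : ILForm → ILForm
  | rhd : ILForm → ILForm → ILForm
  deriving DecidableEq

namespace ILForm

def neg (A : ILForm) : ILForm := A.imp ILForm.bot
def or (A B : ILForm) : ILForm := A.neg.imp B
def and (A B : ILForm) : ILForm := (A.imp B.neg).neg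
def dia (A : ILForm) : ILForm := A.neg.box.neg

end ILForm

/-- A Boolean valuation: respects `⊥` and `→`, arbitrary on variables, boxes and `▷`. -/
def IsBoolVal (v : ILForm → Bool) : Prop :=
  v ILForm.bot = false ∧ ∀ A B : ILForm, v (A.imp B) = (!(v A) || v B)

/-- Classical tautologies in the modal language. -/
def ILTaut (A : ILForm) : Prop := ∀ v, IsBoolVal v → v A = true

/-- Provability in the interpretability logic IL. -/
inductive ILProv : ILForm → Prop
  | taut {A : ILForm} : ILTaut A → ILProv A
  | K {A B : ILForm} : ILProv (((A.imp B).box).imp ((A.box).imp (B.box)))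
  | L {A : ILForm} : ILProv ((((A.box).imp A).box).imp (A.box))
  | J1 {A B : ILForm} : ILProv (((A.imp B).box).imp (A.rhd B))
  | J2 {A B C : ILForm} : ILProv (((A.rhd B).and (B.rhd C)).imp (A.rhd C))
  | J3 {A B C : ILForm} : ILProv (((A.rhd C).and (B.rhd C)).imp ((A.or B).rhd C))
  | J4 {A B : ILForm} : ILProv ((A.rhd B).imp ((A.dia).imp (B.dia)))
  | J5 {A : ILForm} : ILProv ((A.dia).rhd A)
  | mp {A B : ILForm} : ILProv (A.imp B) → ILProv A → ILProv B
  | nec {A : ILForm} : ILProv A → ILProv (A.box)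

/-- An extension of IL: contains all IL theorems, closed under modus ponens and necessitation. -/
structure ILExtension (P : ILForm → Prop) : Prop where
  il : ∀ {A}, ILProv A → P A
  mp : ∀ {A B}, P (A.imp B) → P A → P B
  nec : ∀ {A}, P A → P (A.box)

/-- Derivability from a set of assumptions in the logic `P`. -/
inductive Deriv (P : ILForm → Prop) (S : Set ILForm) : ILForm → Prop
  | thm {A : ILForm} : P A → Deriv P S A
  | mem {A : ILForm} : A ∈ S → Deriv P S A
  | mp {A B : ILForm} : Deriv P S (A.imp B) → Deriv P S A → Deriv P S B

def ILConsistent (P : ILForm → Prop) (S : Set ILForm) : Prop := ¬ Deriv P S ILForm.bot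

/-- Maximal consistent set w.r.t. the logic `P`. -/
def ILMCS (P : ILForm → Prop) (S : Set ILForm) : Prop :=
  ILConsistent P S ∧ ∀ T : Set ILForm, S ⊂ T → ¬ ILConsistent P T

/-- Finite disjunction; the empty disjunction is `⊥`. -/
def bigOr : List ILForm → ILForm
  | [] => ILForm.bot
  | A :: l => A.or (bigOr l)

/-- `Assuring Γ Δ S` ("Γ ≺_S Δ"): Δ is an S-assuring successor of Γ. -/
def Assuring (Γ Δ : Set ILForm) (S : Set ILForm) : Prop :=
  ∀ (A : ILForm) (L : List ILForm), (∀ B ∈ L, B ∈ S) →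
    (A.neg.rhd (bigOr (L.map ILForm.neg))) ∈ Γ → A ∈ Δ ∧ A.box ∈ Δ

/-- `Succ Γ Δ` ("Γ ≺ Δ"): whenever □A ∈ Γ, both A and □A are in Δ. -/
def Succ (Γ Δ : Set ILForm) : Prop :=
  ∀ A : ILForm, A.box ∈ Γ → A ∈ Δ ∧ A.box ∈ Δ

/- ===================== AUX ===================== -/
namespace ILXAux
open ILForm

lemma itaut {φ : ILForm}
    (h : ∀ v : ILForm → Bool, v ILForm.bot = false →
      (∀ A B, v (A.imp B) = (!(v A) || v B)) → v φ = true) : ILTaut φ :=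
  fun v hv => h v hv.1 hv.2

variable {P : ILForm → Prop}

lemma Pt (hP : ILExtension P) {φ : ILForm} (h : ILTaut φ) : P φ := hP.il (ILProv.taut h)

-- basic deriv lemmas
lemma deriv_mono {S T : Set ILForm} {G : ILForm} (h : S ⊆ T) :
    Deriv P S G → Deriv P T G := by
  intro hd; induction hd with
  | thm h' => exact Deriv.thm h'
  | mem h' => exact Deriv.mem (h h')
  | mp _ _ ih1 ih2 => exact Deriv.mp ih1 ih2

lemma deriv_cut {T U : Set ILForm} {G : ILForm} (h : ∀ x ∈ T, Deriv P U x) :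
    Deriv P T G → Deriv P U G := by
  intro hd; induction hd with
  | thm h' => exact Deriv.thm h'
  | mem h' => exact h _ h'
  | mp _ _ ih1 ih2 => exact Deriv.mp ih1 ih2

lemma taut_self (a : ILForm) : ILTaut (a.imp a) := by
  apply itaut; intro v h0 h1; simp [h1]

lemma taut_k (a b : ILForm) : ILTaut (b.imp (a.imp b)) := by
  apply itaut; intro v h0 h1; simp [h1]; cases v a <;> cases v b <;> simp

lemma taut_s (a c b : ILForm) : ILTaut ((a.imp (c.imp b)).imp ((a.imp c).imp (a.imp b))) := by
  apply itaut; intro v h0 h1; simp [h1]; cases v a <;> cases v c <;> cases v b <;> simp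

lemma deduction (hP : ILExtension P) {s : Set ILForm} {a b : ILForm}
    (h : Deriv P (insert a s) b) : Deriv P s (a.imp b) := by
  induction h with
  | thm h' => exact Deriv.mp (Deriv.thm (Pt hP (taut_k a _))) (Deriv.thm h')
  | mem h' =>
    rcases h' with rfl | h'
    · exact Deriv.thm (Pt hP (taut_self _))
    · exact Deriv.mp (Deriv.thm (Pt hP (taut_k a _))) (Deriv.mem h')
  | mp _ _ ih1 ih2 =>
    exact Deriv.mp (Deriv.mp (Deriv.thm (Pt hP (taut_s a _ _))) ih1) ih2

lemma deriv_empty (hP : ILExtension P) {G : ILForm} (h : Deriv P ∅ G) : P G := by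
  induction h with
  | thm h' => exact h'
  | mem h' => exact absurd h' (Set.notMem_empty _)
  | mp _ _ ih1 ih2 => exact hP.mp ih1 ih2

lemma deriv_finite {T : Set ILForm} {G : ILForm} (h : Deriv P T G) :
    ∃ L : List ILForm, (∀ x ∈ L, x ∈ T) ∧ Deriv P {x | x ∈ L} G := by
  induction h with
  | thm h' => exact ⟨[], by simp, Deriv.thm h'⟩
  | @mem A h' => exact ⟨[A], by simpa, Deriv.mem (by simp)⟩
  | mp _ _ ih1 ih2 =>
    obtain ⟨L1, hL1, hd1⟩ := ih1
    obtain ⟨L2, hL2, hd2⟩ := ih2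
    refine ⟨L1 ++ L2, ?_, Deriv.mp (deriv_mono ?_ hd1) (deriv_mono ?_ hd2)⟩
    · intro x hx; rcases List.mem_append.1 hx with h | h
      · exact hL1 x h
      · exact hL2 x h
    · intro x hx; simp only [Set.mem_setOf_eq] at *; exact List.mem_append.2 (Or.inl hx)
    · intro x hx; simp only [Set.mem_setOf_eq] at *; exact List.mem_append.2 (Or.inr hx)

lemma chain_bound {c : Set (Set ILForm)} (hc : IsChain (· ⊆ ·) c) (hne : c.Nonempty)
    (L : List ILForm) (hL : ∀ x ∈ L, x ∈ ⋃₀ c) :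
    ∃ t ∈ c, ∀ x ∈ L, x ∈ t := by
  induction L with
  | nil => exact ⟨hne.choose, hne.choose_spec, by simp⟩
  | cons a l ih =>
    obtain ⟨t, ht, hlt⟩ := ih (fun x hx => hL x (List.mem_cons_of_mem _ hx))
    obtain ⟨s, hs, has⟩ := hL a (List.mem_cons_self (a := a) (l := l))
    rcases hc.total ht hs with h | h
    · refine ⟨s, hs, fun x hx => ?_⟩
      rcases List.mem_cons.1 hx with rfl | hx
      exacts [has, h (hlt x hx)]
    · refine ⟨t, ht, fun x hx => ?_⟩
      rcases List.mem_cons.1 hx with rfl | hx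
      exacts [h has, hlt x hx]

lemma lindenbaum (hP : ILExtension P) {T : Set ILForm} (h : ILConsistent P T) :
    ∃ M, T ⊆ M ∧ ILMCS P M := by
  obtain ⟨M, hTM, hmax⟩ := zorn_subset_nonempty {U : Set ILForm | ILConsistent P U}
    (fun c hc hchain hne => by
      refine ⟨⋃₀ c, ?_, fun s hs => Set.subset_sUnion_of_mem hs⟩
      intro hder
      obtain ⟨L, hL, hd⟩ := deriv_finite hder
      obtain ⟨t, ht, hlt⟩ := chain_bound hchain hne L hL
      exact hc ht (deriv_cut (fun x hx => Deriv.mem (hlt x hx)) hd)) T h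
  refine ⟨M, hTM, hmax.prop, fun U hU hUc => ?_⟩
  exact hU.2 (hmax.2 hUc hU.1)

lemma mcs_deriv {Γ : Set ILForm} (hΓ : ILMCS P Γ) {X : ILForm}
    (h : Deriv P Γ X) : X ∈ Γ := by
  by_contra hX
  refine hΓ.2 (insert X Γ) (Set.ssubset_insert hX) ?_
  intro hbot
  exact hΓ.1 (deriv_cut (fun y hy => by
    rcases hy with rfl | hy
    exacts [h, Deriv.mem hy]) hbot)


/- ---------- tautologies ---------- -/

lemma taut_nn (a : ILForm) : ILTaut (a.neg.neg.imp a) := by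
  apply itaut; intro v h0 h1; simp [ILForm.neg, h1, h0]

lemma taut_andl (a b : ILForm) : ILTaut ((a.and b).imp a) := by
  apply itaut; intro v h0 h1; simp [ILForm.and, ILForm.neg, h1, h0]
  cases v a <;> cases v b <;> simp

lemma taut_andr (a b : ILForm) : ILTaut ((a.and b).imp b) := by
  apply itaut; intro v h0 h1; simp [ILForm.and, ILForm.neg, h1, h0]
  cases v a <;> cases v b <;> simp

lemma taut_and_intro (a b : ILForm) : ILTaut (a.imp (b.imp (a.and b))) := by
  apply itaut; intro v h0 h1; simp [ILForm.and, ILForm.neg, h1, h0]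
  cases v a <;> cases v b <;> simp

lemma taut_negand (a b : ILForm) : ILTaut ((a.and b).neg.imp (a.neg.or b.neg)) := by
  apply itaut; intro v h0 h1; simp [ILForm.and, ILForm.or, ILForm.neg, h1, h0]
  cases v a <;> cases v b <;> simp

lemma taut_comp (a b c : ILForm) : ILTaut ((a.imp b).imp ((b.imp c).imp (a.imp c))) := by
  apply itaut; intro v h0 h1; simp [h1]
  cases v a <;> cases v b <;> cases v c <;> simp

lemma taut_contra (a b : ILForm) : ILTaut ((a.imp b).imp (b.neg.imp a.neg)) := by
  apply itaut; intro v h0 h1; simp [ILForm.neg, h1, h0]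
  cases v a <;> cases v b <;> simp

lemma taut_flip (a b : ILForm) : ILTaut ((a.imp b.neg).imp (b.imp a.neg)) := by
  apply itaut; intro v h0 h1; simp [ILForm.neg, h1, h0]
  cases v a <;> cases v b <;> simp

lemma taut_bot (a : ILForm) : ILTaut (ILForm.bot.imp a) := by
  apply itaut; intro v h0 h1; simp [h1, h0]

lemma taut_negtop : ILTaut ((ILForm.bot.imp ILForm.bot).neg.imp ILForm.bot) := by
  apply itaut; intro v h0 h1; simp [ILForm.neg, h1, h0]

lemma taut_or_mono (a x y : ILForm) : ILTaut ((x.imp y).imp ((a.or x).imp (a.or y))) := by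
  apply itaut; intro v h0 h1; simp [ILForm.or, ILForm.neg, h1, h0]
  cases v a <;> cases v x <;> cases v y <;> simp

lemma taut_or_intro (a x y : ILForm) : ILTaut ((x.imp y).imp (x.imp (a.or y))) := by
  apply itaut; intro v h0 h1; simp [ILForm.or, ILForm.neg, h1, h0]
  cases v a <;> cases v x <;> cases v y <;> simp

lemma taut_lob (b : ILForm) :
    ILTaut (((b.and b.neg.box).neg).imp (b.neg.box.imp b.neg)) := by
  apply itaut; intro v h0 h1; simp [ILForm.and, ILForm.neg, h1, h0]
  cases v b <;> cases v ((b.imp ILForm.bot).box) <;> simp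

lemma taut_split (b : ILForm) :
    ILTaut (b.imp ((b.and b.neg.box).or b.dia)) := by
  apply itaut; intro v h0 h1
  simp [ILForm.and, ILForm.or, ILForm.dia, ILForm.neg, h1, h0]
  cases v b <;> cases v ((b.imp ILForm.bot).box) <;> simp

/- ---------- P-level lemmas ---------- -/

lemma P_imp_trans (hP : ILExtension P) {x y z : ILForm}
    (h1 : P (x.imp y)) (h2 : P (y.imp z)) : P (x.imp z) :=
  hP.mp (hP.mp (Pt hP (taut_comp x y z)) h1) h2

lemma P_contra (hP : ILExtension P) {x y : ILForm} (h : P (x.imp y)) :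
    P (y.neg.imp x.neg) := hP.mp (Pt hP (taut_contra x y)) h

lemma P_rhd_of_imp (hP : ILExtension P) {x y : ILForm} (h : P (x.imp y)) :
    P (x.rhd y) := hP.mp (hP.il ILProv.J1) (hP.nec h)

lemma P_and_intro (hP : ILExtension P) {x y : ILForm} (hx : P x) (hy : P y) :
    P (x.and y) := hP.mp (hP.mp (Pt hP (taut_and_intro x y)) hx) hy

lemma P_rhd_trans (hP : ILExtension P) {x y z : ILForm}
    (h1 : P (x.rhd y)) (h2 : P (y.rhd z)) : P (x.rhd z) :=
  hP.mp (hP.il ILProv.J2) (P_and_intro hP h1 h2)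

lemma P_rhd_or (hP : ILExtension P) {x y z : ILForm}
    (h1 : P (x.rhd z)) (h2 : P (y.rhd z)) : P ((x.or y).rhd z) :=
  hP.mp (hP.il ILProv.J3) (P_and_intro hP h1 h2)

lemma P_box_mono (hP : ILExtension P) {x y : ILForm} (h : P (x.imp y)) :
    P (x.box.imp y.box) := hP.mp (hP.il ILProv.K) (hP.nec h)

lemma P_negbox_rhd (hP : ILExtension P) (c : ILForm) :
    P (c.box.neg.rhd c.neg) := by
  have h1 : P (c.neg.neg.box.imp c.box) := P_box_mono hP (Pt hP (taut_nn c))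
  have h2 : P (c.box.neg.imp c.neg.neg.box.neg) := P_contra hP h1
  have h3 : P (c.box.neg.rhd c.neg.neg.box.neg) := P_rhd_of_imp hP h2
  have h4 : P ((c.neg.dia).rhd c.neg) := hP.il ILProv.J5
  exact P_rhd_trans hP h3 h4

lemma P_negandbox_rhd (hP : ILExtension P) (c : ILForm) :
    P ((c.and c.box).neg.rhd c.neg) := by
  have r1 : P ((c.and c.box).neg.rhd (c.neg.or c.box.neg)) :=
    P_rhd_of_imp hP (Pt hP (taut_negand c c.box))
  have r2 : P ((c.neg.or c.box.neg).rhd c.neg) :=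
    P_rhd_or hP (P_rhd_of_imp hP (Pt hP (taut_self c.neg))) (P_negbox_rhd hP c)
  exact P_rhd_trans hP r1 r2

lemma P_dia_lob (hP : ILExtension P) (b : ILForm) :
    P (b.dia.imp ((b.and b.neg.box).dia)) := by
  have h1 : P (((b.and b.neg.box).neg).box.imp ((b.neg.box.imp b.neg).box)) :=
    P_box_mono hP (Pt hP (taut_lob b))
  have h2 : P (((b.neg.box.imp b.neg).box).imp (b.neg.box)) := hP.il ILProv.L
  exact P_contra hP (P_imp_trans hP h1 h2)

lemma P_rhd_lob (hP : ILExtension P) (b : ILForm) :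
    P (b.rhd (b.and b.neg.box)) := by
  have r1 : P (b.rhd ((b.and b.neg.box).or b.dia)) :=
    P_rhd_of_imp hP (Pt hP (taut_split b))
  have rF : P ((b.and b.neg.box).rhd (b.and b.neg.box)) :=
    P_rhd_of_imp hP (Pt hP (taut_self _))
  have rd : P (b.dia.rhd (b.and b.neg.box)) :=
    P_rhd_trans hP (P_rhd_of_imp hP (P_dia_lob hP b))
      (hP.il (ILProv.J5 (A := b.and b.neg.box)))
  exact P_rhd_trans hP r1 (P_rhd_or hP rF rd)

lemma P_or_mono_r (hP : ILExtension P) {x y : ILForm} (a : ILForm)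
    (h : P (x.imp y)) : P ((a.or x).imp (a.or y)) :=
  hP.mp (Pt hP (taut_or_mono a x y)) h

lemma P_or_intro_r (hP : ILExtension P) {x y : ILForm} (a : ILForm)
    (h : P (x.imp y)) : P (x.imp (a.or y)) :=
  hP.mp (Pt hP (taut_or_intro a x y)) h

lemma P_bigOr_app_l (hP : ILExtension P) (l1 l2 : List ILForm) :
    P ((bigOr l1).imp (bigOr (l1 ++ l2))) := by
  induction l1 with
  | nil => exact Pt hP (taut_bot _)
  | cons a l ih => exact P_or_mono_r hP a ih

lemma P_bigOr_app_r (hP : ILExtension P) (l1 l2 : List ILForm) :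
    P ((bigOr l2).imp (bigOr (l1 ++ l2))) := by
  induction l1 with
  | nil => exact Pt hP (taut_self _)
  | cons a l ih => exact P_or_intro_r hP a ih

/- ---------- Γ-level (MCS) lemmas ---------- -/

lemma d_and_intro (hP : ILExtension P) {s : Set ILForm} {x y : ILForm}
    (hx : Deriv P s x) (hy : Deriv P s y) : Deriv P s (x.and y) :=
  Deriv.mp (Deriv.mp (Deriv.thm (Pt hP (taut_and_intro x y))) hx) hy

lemma mcs_thm {Γ : Set ILForm} (hΓ : ILMCS P Γ) {X : ILForm} (h : P X) : X ∈ Γ :=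
  mcs_deriv hΓ (Deriv.thm h)

lemma g_rhd_trans (hP : ILExtension P) {Γ : Set ILForm} (hΓ : ILMCS P Γ)
    {x y z : ILForm} (h1 : x.rhd y ∈ Γ) (h2 : y.rhd z ∈ Γ) : x.rhd z ∈ Γ :=
  mcs_deriv hΓ (Deriv.mp (Deriv.thm (hP.il ILProv.J2))
    (d_and_intro hP (Deriv.mem h1) (Deriv.mem h2)))

lemma g_rhd_or (hP : ILExtension P) {Γ : Set ILForm} (hΓ : ILMCS P Γ)
    {x y z : ILForm} (h1 : x.rhd z ∈ Γ) (h2 : y.rhd z ∈ Γ) : (x.or y).rhd z ∈ Γ :=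
  mcs_deriv hΓ (Deriv.mp (Deriv.thm (hP.il ILProv.J3))
    (d_and_intro hP (Deriv.mem h1) (Deriv.mem h2)))

end ILXAux


open ILXAux

/-- A ▷ B ∈ Γ ≺_S Δ ∋ A yields Δ' with Γ ≺_S Δ' ∋ B, □¬B. -/
theorem assuring_defies (P : ILForm → Prop) (hP : ILExtension P)
    (Γ Δ : Set ILForm) (hΓ : ILMCS P Γ) (hΔ : ILMCS P Δ)
    (A B : ILForm) (S : Set ILForm)
    (hrhd : A.rhd B ∈ Γ) (hAss : Assuring Γ Δ S) (hA : A ∈ Δ) :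
    ∃ Δ' : Set ILForm, ILMCS P Δ' ∧ Assuring Γ Δ' S ∧ B ∈ Δ' ∧ B.neg.box ∈ Δ' := by
  classical
  set F : ILForm := B.and B.neg.box with hF
  set T0 : Set ILForm := {X | ∃ (C : ILForm) (L : List ILForm),
    (∀ b ∈ L, b ∈ S) ∧ C.neg.rhd (bigOr (L.map ILForm.neg)) ∈ Γ ∧
    (X = C ∨ X = C.box)} with hT0
  have mΓ : ∀ {X : ILForm}, P X → X ∈ Γ := fun h => mcs_thm hΓ h
  -- conjunction-combining along a finite list of T0-elements
  have key : ∀ L : List ILForm, (∀ x ∈ L, x ∈ T0) →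
      ∃ (G : ILForm) (L' : List ILForm), (∀ b ∈ L', b ∈ S) ∧
        (G.neg.rhd (bigOr (L'.map ILForm.neg)) ∈ Γ) ∧ ∀ x ∈ L, P (G.imp x) := by
    intro L
    induction L with
    | nil =>
      intro _
      refine ⟨ILForm.bot.imp ILForm.bot, [], by simp, ?_, by simp⟩
      exact mΓ (P_rhd_of_imp hP (Pt hP taut_negtop))
    | cons x l ih =>
      intro hmem
      obtain ⟨G, L', hS', hG, himp⟩ := ih (fun y hy => hmem y (List.mem_cons_of_mem _ hy))
      obtain ⟨C, Lc, hSc, hC, hx⟩ := hmem x (List.mem_cons_self (a := x) (l := l))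
      refine ⟨(C.and C.box).and G, Lc ++ L', ?_, ?_, ?_⟩
      · intro b hb
        rcases List.mem_append.1 hb with h | h
        exacts [hSc b h, hS' b h]
      · have hmap : (Lc ++ L').map ILForm.neg = Lc.map ILForm.neg ++ L'.map ILForm.neg :=
          List.map_append
        have e1 : P ((bigOr (Lc.map ILForm.neg)).imp (bigOr ((Lc ++ L').map ILForm.neg))) := by
          rw [hmap]; exact P_bigOr_app_l hP _ _
        have e2 : P ((bigOr (L'.map ILForm.neg)).imp (bigOr ((Lc ++ L').map ILForm.neg))) := by
          rw [hmap]; exact P_bigOr_app_r hP _ _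
        have hCE : C.neg.rhd (bigOr ((Lc ++ L').map ILForm.neg)) ∈ Γ :=
          g_rhd_trans hP hΓ hC (mΓ (P_rhd_of_imp hP e1))
        have hCCb : (C.and C.box).neg.rhd (bigOr ((Lc ++ L').map ILForm.neg)) ∈ Γ :=
          g_rhd_trans hP hΓ (mΓ (P_negandbox_rhd hP C)) hCE
        have hGE : G.neg.rhd (bigOr ((Lc ++ L').map ILForm.neg)) ∈ Γ :=
          g_rhd_trans hP hΓ hG (mΓ (P_rhd_of_imp hP e2))
        have hor : ((C.and C.box).neg.or G.neg).rhd (bigOr ((Lc ++ L').map ILForm.neg)) ∈ Γ :=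
          g_rhd_or hP hΓ hCCb hGE
        exact g_rhd_trans hP hΓ
          (mΓ (P_rhd_of_imp hP (Pt hP (taut_negand (C.and C.box) G)))) hor
      · intro y hy
        rcases List.mem_cons.1 hy with rfl | hy
        · rcases hx with rfl | rfl
          · exact P_imp_trans hP (Pt hP (taut_andl _ _)) (Pt hP (taut_andl _ _))
          · exact P_imp_trans hP (Pt hP (taut_andl _ _)) (Pt hP (taut_andr _ _))
        · exact P_imp_trans hP (Pt hP (taut_andr _ _)) (himp y hy)
  -- consistency of insert F T0
  have hcons : ILConsistent P (insert F T0) := by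
    intro hbot
    have h1 : Deriv P T0 (F.imp ILForm.bot) := deduction hP hbot
    obtain ⟨L, hL, hd⟩ := deriv_finite h1
    obtain ⟨G, L', hS', hG, himp⟩ := key L hL
    have h2 : Deriv P (insert G (∅ : Set ILForm)) (F.imp ILForm.bot) :=
      deriv_cut (fun x hx => Deriv.mp (Deriv.thm (himp x hx))
        (Deriv.mem (Set.mem_insert _ _))) hd
    have h3 : P (G.imp F.neg) := deriv_empty hP (deduction hP h2)
    have h4 : P (F.imp G.neg) := hP.mp (Pt hP (taut_flip G F)) h3
    have r1 : A.rhd F ∈ Γ := g_rhd_trans hP hΓ hrhd (mΓ (P_rhd_lob hP B))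
    have r2 : F.rhd G.neg ∈ Γ := mΓ (P_rhd_of_imp hP h4)
    have r3 : A.rhd (bigOr (L'.map ILForm.neg)) ∈ Γ :=
      g_rhd_trans hP hΓ (g_rhd_trans hP hΓ r1 r2) hG
    have r4 : A.neg.neg.rhd (bigOr (L'.map ILForm.neg)) ∈ Γ :=
      g_rhd_trans hP hΓ (mΓ (P_rhd_of_imp hP (Pt hP (taut_nn A)))) r3
    have hnA : A.neg ∈ Δ := (hAss A.neg L' hS' r4).1
    exact hΔ.1 (Deriv.mp (Deriv.mem hnA) (Deriv.mem hA))
  obtain ⟨Δ', hsub, hmcs⟩ := lindenbaum hP hcons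
  refine ⟨Δ', hmcs, ?_, ?_, ?_⟩
  · intro C L hLS hmemΓ
    exact ⟨hsub (Set.mem_insert_iff.2 (Or.inr ⟨C, L, hLS, hmemΓ, Or.inl rfl⟩)),
      hsub (Set.mem_insert_iff.2 (Or.inr ⟨C, L, hLS, hmemΓ, Or.inr rfl⟩))⟩
  · exact mcs_deriv hmcs (Deriv.mp (Deriv.thm (Pt hP (taut_andl B B.neg.box)))
      (Deriv.mem (hsub (Set.mem_insert _ _))))
  · exact mcs_deriv hmcs (Deriv.mp (Deriv.thm (Pt hP (taut_andr B B.neg.box)))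
      (Deriv.mem (hsub (Set.mem_insert _ _))))
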